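/- Let K, L be Hilbert spaces, I, J positive integers, and [[α, B],[C, D]] : ℂ ⊕ L^I → ℂ ⊕ L^J an isometry (α ∈ ℂ, B : L^I → ℂ, C : ℂ → L^J, D : L^I → L^J). Let Δ : K^J → K^I be a bounded operator with ‖Δ‖ < 1 and define H = α·I_K + (I_K ⊗ B)(Δ ⊗ I_L)[I - (I_K ⊗ D)(Δ ⊗ I_L)]^{-1}(I_K ⊗ C) ∈ B(K). Then I_K - H*H = Ċ*[I - Δ̇*Ḋ*]^{-1}[I - Δ̇*Δ̇][I - ḊΔ̇]^{-1}Ċ ≥ 0, where Ċ = I_K ⊗ C, Ḋ = I_K ⊗ D, Δ̇ = Δ ⊗ I_L; in particular ‖H‖ ≤ 1. -/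

import Mathlib

set_option maxHeartbeats 1000000 in
open ContinuousLinearMap in
/-- The transfer-function realization of a Schur-class function is a
contraction.  Here `K` is a Hilbert space; `Bd : M →L K`, `Cd : K →L N`, `Dd : M →L N`
play the roles of the amplified blocks `I_K ⊗ B`, `I_K ⊗ C`, `I_K ⊗ D` of an isometry
`[[α, B],[C, D]] : ℂ ⊕ L^I → ℂ ⊕ L^J` (with `M = K ⊗ L^I`, `N = K ⊗ L^J`), the
hypotheses `hcol1`–`hcol3` being exactly the amplified isometry relations
`ᾱα + C*C = 1`, `ᾱB + C*D = 0`, `B*B + D*D = I`; and `Δ` plays the role of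
`δ(x) ⊗ I_L` with `‖Δ‖ < 1`.  With
`Hop = α I + Bd Δ (I - Dd Δ)⁻¹ Cd`, one has
`I - Hop* Hop = Cd* (I - Δ* Dd*)⁻¹ (I - Δ*Δ) (I - Dd Δ)⁻¹ Cd ≥ 0`, so `‖Hop‖ ≤ 1`. -/
theorem stmt12
    {K M N : Type*}
    [NormedAddCommGroup K] [InnerProductSpace ℂ K] [CompleteSpace K]
    [NormedAddCommGroup M] [InnerProductSpace ℂ M] [CompleteSpace M]
    [NormedAddCommGroup N] [InnerProductSpace ℂ N] [CompleteSpace N]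
    (α : ℂ) (Bd : M →L[ℂ] K) (Cd : K →L[ℂ] N) (Dd : M →L[ℂ] N)
    (hcol1 : adjoint Cd ∘L Cd = ((1 : ℂ) - (starRingEnd ℂ α) * α) • (1 : K →L[ℂ] K))
    (hcol2 : adjoint Cd ∘L Dd = (-(starRingEnd ℂ α)) • Bd)
    (hcol3 : adjoint Bd ∘L Bd + adjoint Dd ∘L Dd = (1 : M →L[ℂ] M))
    (Δ : N →L[ℂ] M) (hΔ : ‖Δ‖ < 1)
    (Hop : K →L[ℂ] K)
    (hHop : Hop = α • (1 : K →L[ℂ] K) +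
      Bd ∘L Δ ∘L Ring.inverse ((1 : N →L[ℂ] N) - Dd ∘L Δ) ∘L Cd) :
    (1 : K →L[ℂ] K) - adjoint Hop ∘L Hop =
        adjoint Cd ∘L
          Ring.inverse ((1 : N →L[ℂ] N) - adjoint Δ ∘L adjoint Dd) ∘L
          ((1 : N →L[ℂ] N) - adjoint Δ ∘L Δ) ∘L
          Ring.inverse ((1 : N →L[ℂ] N) - Dd ∘L Δ) ∘L Cd ∧
      ((1 : K →L[ℂ] K) - adjoint Hop ∘L Hop).IsPositive ∧ ‖Hop‖ ≤ 1 := by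
  -- `Dd` is a contraction
  have hDpt : ∀ x : M, ‖Dd x‖ ≤ ‖x‖ := by
    intro x
    have h0 : (adjoint Bd ∘L Bd + adjoint Dd ∘L Dd) x = x := by rw [hcol3]; rfl
    have h1 : (inner ℂ (Bd x) (Bd x) : ℂ) + inner ℂ (Dd x) (Dd x) = inner ℂ x x := by
      have := congrArg (fun y : M => (inner ℂ y x : ℂ)) h0
      simpa [inner_add_left, adjoint_inner_left] using this
    have h2 : ((‖Bd x‖ : ℂ))^2 + ((‖Dd x‖ : ℂ))^2 = ((‖x‖ : ℂ))^2 := by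
      rwa [inner_self_eq_norm_sq_to_K, inner_self_eq_norm_sq_to_K,
        inner_self_eq_norm_sq_to_K] at h1
    have h3 : ‖Bd x‖^2 + ‖Dd x‖^2 = ‖x‖^2 := by exact_mod_cast h2
    nlinarith [norm_nonneg (Bd x), norm_nonneg (Dd x), norm_nonneg x]
  have hDd : ‖Dd‖ ≤ 1 := opNorm_le_bound _ zero_le_one fun x => by
    rw [one_mul]; exact hDpt x
  have hnorm : ‖Dd ∘L Δ‖ < 1 := by
    calc ‖Dd ∘L Δ‖ ≤ ‖Dd‖ * ‖Δ‖ := opNorm_comp_le _ _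
    _ ≤ 1 * ‖Δ‖ := mul_le_mul_of_nonneg_right hDd (norm_nonneg Δ)
    _ < 1 := by rwa [one_mul]
  have hU : IsUnit ((1 : N →L[ℂ] N) - Dd ∘L Δ) := isUnit_one_sub_of_norm_lt_one hnorm
  set G : N →L[ℂ] N := Ring.inverse ((1 : N →L[ℂ] N) - Dd ∘L Δ) with hG
  have hEGc : ((1 : N →L[ℂ] N) - Dd ∘L Δ) ∘L G = 1 := Ring.mul_inverse_cancel _ hU
  have hadjE : adjoint ((1 : N →L[ℂ] N) - Dd ∘L Δ)
      = (1 : N →L[ℂ] N) - adjoint Δ ∘L adjoint Dd := by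
    rw [map_sub, adjoint_comp, ← star_eq_adjoint (1 : N →L[ℂ] N), star_one]
  have hGadj : adjoint G = Ring.inverse ((1 : N →L[ℂ] N) - adjoint Δ ∘L adjoint Dd) := by
    rw [← hadjE, ← star_eq_adjoint, ← star_eq_adjoint, hG, Ring.inverse_star]
  have hpos1 : ((1 : N →L[ℂ] N) - adjoint Δ ∘L Δ).IsPositive := by
    constructor
    · rw [← isSelfAdjoint_iff_isSymmetric, IsSelfAdjoint, star_sub, star_one, star_eq_adjoint, adjoint_comp,
        adjoint_adjoint]
    · intro x
      rw [reApplyInnerSelf_apply]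
      simp only [sub_apply, ContinuousLinearMap.one_apply, coe_comp', Function.comp_apply, inner_sub_left]
      rw [adjoint_inner_left, map_sub, inner_self_eq_norm_sq, inner_self_eq_norm_sq]
      have hx : ‖Δ x‖ ≤ ‖x‖ := by
        calc ‖Δ x‖ ≤ ‖Δ‖ * ‖x‖ := le_opNorm Δ x
        _ ≤ 1 * ‖x‖ := mul_le_mul_of_nonneg_right hΔ.le (norm_nonneg x)
        _ = ‖x‖ := one_mul _
      nlinarith [norm_nonneg (Δ x), norm_nonneg x]
  -- abbreviations
  set Cs := adjoint Cd with hCs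
  set Bs := adjoint Bd with hBs
  set Ds := adjoint Dd with hDs
  set Δs := adjoint Δ with hΔs
  set Gs := adjoint G with hGs
  set X : K →L[ℂ] M := Δ ∘L G ∘L Cd with hX
  -- key relations from invertibility
  have h1 : Dd ∘L X = G ∘L Cd - Cd := by
    have h := congrArg (fun T : N →L[ℂ] N => T ∘L Cd) hEGc
    simp only [sub_comp, one_def, id_comp, comp_assoc, ← hX] at h
    calc Dd ∘L X = G ∘L Cd - (G ∘L Cd - Dd ∘L X) := by abel
      _ = G ∘L Cd - Cd := by rw [h]
  have hadj1 : Gs ∘L ((1 : N →L[ℂ] N) - Δs ∘L Ds) = 1 := by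
    have h := congrArg (fun T => adjoint T) hEGc
    simp only [adjoint_comp, hadjE, ← hGs, ← hΔs, ← hDs,
      ← star_eq_adjoint (1 : N →L[ℂ] N), star_one] at h
    exact h
  have h2 : Cs ∘L Gs ∘L Δs ∘L Ds = Cs ∘L Gs - Cs := by
    have h' := congrArg (fun T : N →L[ℂ] N => Cs ∘L T) hadj1
    simp only [comp_sub, one_def, comp_id, comp_assoc] at h'
    calc Cs ∘L Gs ∘L Δs ∘L Ds
        = Cs ∘L Gs - (Cs ∘L Gs - Cs ∘L Gs ∘L Δs ∘L Ds) := by abel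
      _ = Cs ∘L Gs - Cs := by rw [h']
  -- adjoint of the second column relation
  have hcol2' : Ds ∘L Cd = (-α) • Bs := by
    have h := congrArg (fun T => adjoint T) hcol2
    simp only [adjoint_comp, ← hDs, ← hBs, hCs, adjoint_adjoint,
      LinearIsometryEquiv.map_smulₛₗ, RingHom.id_apply, starRingEnd_apply, star_neg,
      star_star] at h
    simpa [← starRingEnd_apply, neg_smul] using h
  -- expanded adjoint of X and of Hop
  have hXadj : adjoint X = Cs ∘L Gs ∘L Δs := by
    rw [hX, adjoint_comp, adjoint_comp, ← hCs, ← hΔs, ← hGs]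
    simp only [comp_assoc]
  have hHadj : adjoint Hop = (starRingEnd ℂ α) • (1 : K →L[ℂ] K)
      + Cs ∘L Gs ∘L Δs ∘L Bs := by
    rw [hHop, map_add, adjoint_comp, hXadj, LinearIsometryEquiv.map_smulₛₗ,
      ← star_eq_adjoint (1 : K →L[ℂ] K), star_one, ← hBs]
    simp only [RingHom.id_apply, starRingEnd_apply, comp_assoc]
  -- term rewrites
  have e2 : ((starRingEnd ℂ α) * α) • (1 : K →L[ℂ] K) = 1 - Cs ∘L Cd := by
    rw [hcol1, sub_smul, one_smul]; abel
  have e3 : (starRingEnd ℂ α) • (Bd ∘L X) = Cs ∘L Cd - Cs ∘L G ∘L Cd := by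
    have h : Cs ∘L Dd ∘L X = ((-(starRingEnd ℂ α)) • Bd) ∘L X := by
      rw [← comp_assoc, hcol2]
    rw [h1, neg_smul, neg_comp, smul_comp, comp_sub] at h
    rw [neg_eq_iff_eq_neg.mp h.symm, neg_sub]
  have e4 : α • (Cs ∘L Gs ∘L Δs ∘L Bs) = Cs ∘L Cd - Cs ∘L Gs ∘L Cd := by
    have h : Cs ∘L Gs ∘L Δs ∘L Ds ∘L Cd = Cs ∘L Gs ∘L Δs ∘L ((-α) • Bs) := by
      rw [hcol2']
    have h' : (Cs ∘L Gs ∘L Δs ∘L Ds) ∘L Cd = -(α • (Cs ∘L Gs ∘L Δs ∘L Bs)) := by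
      simp only [comp_assoc]
      rw [h]
      simp only [comp_smul, neg_smul, comp_neg]
    rw [h2, sub_comp] at h'
    rw [neg_eq_iff_eq_neg.mp h'.symm, neg_sub]
    simp only [comp_assoc]
  have e5 : Bs ∘L Bd ∘L X = X - Ds ∘L (G ∘L Cd - Cd) := by
    have h := congrArg (fun T : M →L[ℂ] M => T ∘L X) hcol3
    simp only [add_comp, one_def, id_comp, comp_assoc] at h
    rw [h1] at h
    calc Bs ∘L Bd ∘L X
        = (Bs ∘L Bd ∘L X + Ds ∘L (G ∘L Cd - Cd)) - Ds ∘L (G ∘L Cd - Cd) := by abel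
      _ = X - Ds ∘L (G ∘L Cd - Cd) := by rw [h]
  -- main identity
  have main : (1 : K →L[ℂ] K) - adjoint Hop ∘L Hop
      = adjoint (G ∘L Cd) ∘L ((1 : N →L[ℂ] N) - Δs ∘L Δ) ∘L (G ∘L Cd) := by
    have expand : adjoint Hop ∘L Hop =
        ((starRingEnd ℂ α) * α) • (1 : K →L[ℂ] K)
        + (starRingEnd ℂ α) • (Bd ∘L X)
        + α • (Cs ∘L Gs ∘L Δs ∘L Bs)
        + Cs ∘L Gs ∘L Δs ∘L (Bs ∘L Bd ∘L X) := by
      rw [hHadj, hHop]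
      simp only [add_comp, comp_add, smul_comp, comp_smul, smul_smul, one_def, id_comp,
        comp_id, comp_assoc, smul_add]
      rw [mul_comm α ((starRingEnd ℂ) α)]
      abel
    rw [expand, e2, e3, e4, e5]
    have hlast : Cs ∘L Gs ∘L Δs ∘L (X - Ds ∘L (G ∘L Cd - Cd))
        = Cs ∘L Gs ∘L Δs ∘L X - (Cs ∘L Gs - Cs) ∘L (G ∘L Cd - Cd) := by
      rw [← h2]
      simp only [comp_sub, sub_comp, comp_assoc]
    rw [hlast]
    have hadjGC : adjoint (G ∘L Cd) = Cs ∘L Gs := by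
      rw [adjoint_comp, ← hCs, ← hGs]
    rw [hadjGC, hX]
    simp only [comp_sub, sub_comp, one_def, id_comp, comp_id, comp_assoc]
    abel
  have hpos : ((1 : K →L[ℂ] K) - adjoint Hop ∘L Hop).IsPositive := by
    rw [main]
    exact hpos1.adjoint_conj (G ∘L Cd)
  refine ⟨?_, hpos, ?_⟩
  · rw [← hGadj, main, adjoint_comp, ← hCs, ← hGs]
    simp only [comp_assoc]
  · refine opNorm_le_bound _ zero_le_one fun x => ?_
    rw [one_mul]
    have h := hpos.re_inner_nonneg_left x
    rw [sub_apply, ContinuousLinearMap.one_apply, coe_comp', Function.comp_apply, inner_sub_left,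
      adjoint_inner_left, map_sub, inner_self_eq_norm_sq, inner_self_eq_norm_sq] at h
    nlinarith [norm_nonneg (Hop x), norm_nonneg x]
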